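/- Let Γ = diag(σ_1², …, σ_n²) with σ_1 ≥ ⋯ ≥ σ_n ≥ 0, and suppose σ_p > σ_{p+1}. Then X ∈ St(n,p) maximises det(XᵀΓX) over the Stiefel manifold St(n,p) if and only if range(X) equals the span of the first p standard basis vectors of ℝ^n, and the maximum value is ∏_{i=1}^p σ_i². -/

import Mathlib

open Matrix
open Finset


instance myDecSM {k m : ℕ} : DecidablePred (fun f : Fin k → Fin m => StrictMono f) :=
  fun _ => decidable_of_iff (∀ a b, a < b → _ < _) Iff.rfl

/-- decompose an injective tuple into strictly monotone ∘ permutation -/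
lemma exists_sm_comp {k m : ℕ} {g : Fin k → Fin m} (hg : Function.Injective g) :
    ∃ (f : Fin k → Fin m) (τ : Equiv.Perm (Fin k)), StrictMono f ∧ g = f ∘ τ := by
  set s : Finset (Fin m) := Finset.univ.image g with hs
  have hcard : s.card = k := by
    rw [hs, Finset.card_image_of_injective _ hg, Finset.card_univ, Fintype.card_fin]
  refine ⟨s.orderEmbOfFin hcard, ?_, (s.orderEmbOfFin hcard).strictMono, ?_⟩
  · have hmem : ∀ i, g i ∈ s := fun i => Finset.mem_image_of_mem _ (Finset.mem_univ i)
    have hbij : Function.Bijective (fun i => (⟨g i, hmem i⟩ : s)) := by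
      rw [Fintype.bijective_iff_injective_and_card]
      constructor
      · intro a b h
        exact hg (congrArg Subtype.val h)
      · simp [Fintype.card_coe, hcard]
    exact (Equiv.ofBijective _ hbij).trans (s.orderIsoOfFin hcard).symm.toEquiv
  · funext i
    have hmem : g i ∈ s := Finset.mem_image_of_mem _ (Finset.mem_univ i)
    show g i = s.orderEmbOfFin hcard ((s.orderIsoOfFin hcard).symm ⟨g i, hmem⟩)
    rw [← Finset.coe_orderIsoOfFin_apply, OrderIso.apply_symm_apply]




lemma sm_eq_of_image_eq {k m : ℕ} {f₁ f₂ : Fin k → Fin m} (h₁ : StrictMono f₁)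
    (h₂ : StrictMono f₂) (h : Finset.univ.image f₁ = Finset.univ.image f₂) : f₁ = f₂ := by
  have hc : (Finset.univ.image f₁).card = k := by
    rw [Finset.card_image_of_injective _ h₁.injective, Finset.card_univ, Fintype.card_fin]
  exact (Finset.orderEmbOfFin_unique hc (fun x => Finset.mem_image_of_mem _ (Finset.mem_univ x)) h₁).trans
    (Finset.orderEmbOfFin_unique hc (fun x => h ▸ Finset.mem_image_of_mem _ (Finset.mem_univ x)) h₂).symm

lemma cauchy_binet {m k : ℕ} (A B : Matrix (Fin m) (Fin k) ℝ) :
    (Aᵀ * B).det = ∑ f ∈ Finset.univ.filter (fun f : Fin k → Fin m => StrictMono f),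
      (A.submatrix f id).det * (B.submatrix f id).det :=
  calc
    (Aᵀ * B).det = ∑ g : Fin k → Fin m, ∑ σ : Equiv.Perm (Fin k),
        ((Equiv.Perm.sign σ : ℤ) : ℝ) * ∏ i, A (g i) (σ i) * B (g i) i := by
      simp only [det_apply', mul_apply, transpose_apply, prod_univ_sum, mul_sum,
        Fintype.piFinset_univ]
      rw [Finset.sum_comm]
    _ = ∑ g : Fin k → Fin m, (A.submatrix g id).det * ∏ i, B (g i) i := by
      refine Finset.sum_congr rfl fun g _ => ?_
      have : (A.submatrix g id).det = ((A.submatrix g id)ᵀ).det := (det_transpose _).symm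
      rw [this, det_apply', Finset.sum_mul]
      refine Finset.sum_congr rfl fun σ _ => ?_
      rw [Finset.prod_mul_distrib, mul_assoc]
      rfl
    _ = ∑ g ∈ Finset.univ.filter (fun g : Fin k → Fin m => Function.Injective g),
        (A.submatrix g id).det * ∏ i, B (g i) i := by
      symm
      refine Finset.sum_subset (Finset.filter_subset _ _) fun g _ hg => ?_
      have hni : ¬ Function.Injective g := by simpa using hg
      rw [Function.not_injective_iff] at hni
      obtain ⟨i, j, hij, hne⟩ := hni
      rw [Matrix.det_zero_of_row_eq hne (by ext l; simp [hij]), zero_mul]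
    _ = ∑ ft ∈ (Finset.univ.filter (fun f : Fin k → Fin m => StrictMono f)) ×ˢ
          (Finset.univ : Finset (Equiv.Perm (Fin k))),
        (A.submatrix (ft.1 ∘ ft.2) id).det * ∏ i, B (ft.1 (ft.2 i)) i := by
      refine (Finset.sum_bij (fun ft _ => ft.1 ∘ ft.2) ?_ ?_ ?_ ?_).symm
      · rintro ⟨f, τ⟩ hft
        simp only [Finset.mem_product, Finset.mem_filter, Finset.mem_univ, true_and] at hft ⊢
        exact (hft.1.injective.comp τ.injective)
      · rintro ⟨f₁, τ₁⟩ h₁ ⟨f₂, τ₂⟩ h₂ heq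
        simp only [Finset.mem_product, Finset.mem_filter, Finset.mem_univ, true_and] at h₁ h₂
        have heq' : f₁ ∘ τ₁ = f₂ ∘ τ₂ := heq
        have himg : Finset.univ.image f₁ = Finset.univ.image f₂ := by
          have e1 : Finset.univ.image (f₁ ∘ τ₁) = Finset.univ.image f₁ := by
            rw [← Finset.image_image, Finset.image_univ_equiv]
          have e2 : Finset.univ.image (f₂ ∘ τ₂) = Finset.univ.image f₂ := by
            rw [← Finset.image_image, Finset.image_univ_equiv]
          rw [← e1, ← e2, heq']
        have hf : f₁ = f₂ := sm_eq_of_image_eq h₁.1 h₂.1 himg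
        subst hf
        have hτ : τ₁ = τ₂ := Equiv.ext fun i => h₁.1.injective (congrFun heq' i)
        rw [hτ]
      · intro g hg
        simp only [Finset.mem_filter, Finset.mem_univ, true_and] at hg
        obtain ⟨f, τ, hsm, hfact⟩ := exists_sm_comp hg
        exact ⟨⟨f, τ⟩, by simp [hsm], hfact.symm⟩
      · rintro ⟨f, τ⟩ _
        rfl
    _ = ∑ f ∈ Finset.univ.filter (fun f : Fin k → Fin m => StrictMono f),
        ∑ τ : Equiv.Perm (Fin k),
          (A.submatrix (f ∘ τ) id).det * ∏ i, B (f (τ i)) i := Finset.sum_product _ _ _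
    _ = ∑ f ∈ Finset.univ.filter (fun f : Fin k → Fin m => StrictMono f),
        (A.submatrix f id).det * (B.submatrix f id).det := by
      refine Finset.sum_congr rfl fun f _ => ?_
      rw [det_apply' (B.submatrix f id), Finset.mul_sum]
      refine Finset.sum_congr rfl fun τ _ => ?_
      have : A.submatrix (f ∘ τ) id = (A.submatrix f id).submatrix τ id := rfl
      rw [this, Matrix.det_permute]
      simp only [submatrix_apply, id_eq]
      push_cast
      ring


lemma sm_eq_of_image_eq' {k m : ℕ} {f₁ f₂ : Fin k → Fin m} (h₁ : StrictMono f₁)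
    (h₂ : StrictMono f₂) (h : Finset.univ.image f₁ = Finset.univ.image f₂) : f₁ = f₂ := by
  have hc : (Finset.univ.image f₁).card = k := by
    rw [Finset.card_image_of_injective _ h₁.injective, Finset.card_univ, Fintype.card_fin]
  exact (Finset.orderEmbOfFin_unique hc (fun x => Finset.mem_image_of_mem _ (Finset.mem_univ x)) h₁).trans
    (Finset.orderEmbOfFin_unique hc (fun x => h ▸ Finset.mem_image_of_mem _ (Finset.mem_univ x)) h₂).symm

lemma sm_le_apply {k m : ℕ} {f : Fin k → Fin m} (hf : StrictMono f) :
    ∀ i : Fin k, (i : ℕ) ≤ (f i : ℕ) := by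
  have H : ∀ v (hv : v < k), v ≤ (f ⟨v, hv⟩ : ℕ) := by
    intro v
    induction v with
    | zero => intro hv; exact Nat.zero_le _
    | succ w ih =>
      intro hv
      have hw : w < k := Nat.lt_of_succ_lt hv
      have h1 : f ⟨w, hw⟩ < f ⟨w + 1, hv⟩ := hf (by simp [Fin.lt_def])
      have h2 := ih hw
      rw [Fin.lt_def] at h1
      omega
  intro i
  have := H i.val i.isLt
  simpa using this

/-- a strictly monotone map `Fin p → Fin n` different from the inclusion has its
last value at index `≥ p`. -/
lemma sm_last_big {n p : ℕ} (hpn : p ≤ n) (hp : 0 < p) {f : Fin p → Fin n}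
    (hf : StrictMono f) (hne : f ≠ Fin.castLE hpn) :
    p ≤ (f ⟨p - 1, by omega⟩ : ℕ) := by
  by_contra h
  push_neg at h
  have hall : ∀ i : Fin p, (f i : ℕ) < p := by
    intro i
    have hle : i ≤ (⟨p - 1, by omega⟩ : Fin p) := by
      rw [Fin.le_def]
      have := i.isLt
      simp only []
      omega
    exact lt_of_le_of_lt (by exact_mod_cast hf.monotone hle) h
  set f' : Fin p → Fin p := fun i => ⟨(f i : ℕ), hall i⟩ with hf'
  have hsm' : StrictMono f' := by
    intro a b hab
    have := hf hab
    rw [Fin.lt_def] at this ⊢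
    exact this
  have himg : Finset.univ.image f' = Finset.univ.image (id : Fin p → Fin p) := by
    rw [Finset.image_id]
    apply Finset.eq_univ_of_card
    rw [Finset.card_image_of_injective _ hsm'.injective, Finset.card_univ]
  have : f' = id := sm_eq_of_image_eq' hsm' strictMono_id himg
  apply hne
  funext i
  have : f' i = i := congrFun this i
  rw [Fin.ext_iff] at this ⊢
  simpa using this


section
variable {n p : ℕ} (hpn : p ≤ n) (hp : 0 < p) (σ : Fin n → ℝ)
    (hmono : ∀ i j : Fin n, i ≤ j → σ j ≤ σ i) (hσ0 : ∀ i, 0 ≤ σ i)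
    (i₁ i₂ : Fin n) (hi₁ : (i₁ : ℕ) = p - 1) (hi₂ : (i₂ : ℕ) = p)
    (hgap : σ i₂ < σ i₁)

include hmono hσ0 hi₁ hi₂ hgap hp in
lemma sigma_pos_small : ∀ k : Fin n, (k : ℕ) < p → 0 < σ k := by
  intro k hk
  have h1 : k ≤ i₁ := by rw [Fin.le_def]; omega
  exact lt_of_le_of_lt (hσ0 i₂) (lt_of_lt_of_le hgap (hmono k i₁ h1))

include hmono hσ0 in
lemma weight_le {f : Fin p → Fin n} (hf : StrictMono f) :
    ∏ i, σ (f i) ^ 2 ≤ ∏ i, σ (Fin.castLE hpn i) ^ 2 := by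
  refine Finset.prod_le_prod (fun i _ => sq_nonneg _) fun i _ => ?_
  have h1 : Fin.castLE hpn i ≤ f i := by
    rw [Fin.le_def]; simpa using sm_le_apply hf i
  have := hmono _ _ h1
  exact pow_le_pow_left₀ (hσ0 _) this 2

include hmono hσ0 hi₁ hi₂ hgap hp in
lemma weight_lt {f : Fin p → Fin n} (hf : StrictMono f) (hne : f ≠ Fin.castLE hpn) :
    ∏ i, σ (f i) ^ 2 < ∏ i, σ (Fin.castLE hpn i) ^ 2 := by
  set l : Fin p := ⟨p - 1, by omega⟩ with hl
  have hbig : p ≤ (f l : ℕ) := sm_last_big hpn hp hf hne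
  have hstep : σ (f l) ^ 2 < σ (Fin.castLE hpn l) ^ 2 := by
    have h1 : σ (f l) ≤ σ i₂ := hmono i₂ (f l) (by rw [Fin.le_def]; omega)
    have h2 : σ i₁ ≤ σ (Fin.castLE hpn l) := by
      apply hmono
      rw [Fin.le_def]
      simp [hi₁, hl]
    have := lt_of_le_of_lt h1 (lt_of_lt_of_le hgap h2)
    exact pow_lt_pow_left₀ this (hσ0 _) two_ne_zero
  have hrest_pos : 0 < ∏ i ∈ Finset.univ.erase l, σ (Fin.castLE hpn i) ^ 2 := by
    refine Finset.prod_pos fun i _ => ?_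
    have := sigma_pos_small hp σ hmono hσ0 i₁ i₂ hi₁ hi₂ hgap (Fin.castLE hpn i) (by simpa using i.isLt)
    positivity
  have hrest_le : ∏ i ∈ Finset.univ.erase l, σ (f i) ^ 2
      ≤ ∏ i ∈ Finset.univ.erase l, σ (Fin.castLE hpn i) ^ 2 := by
    refine Finset.prod_le_prod (fun i _ => sq_nonneg _) fun i _ => ?_
    have h1 : Fin.castLE hpn i ≤ f i := by
      rw [Fin.le_def]; simpa using sm_le_apply hf i
    exact pow_le_pow_left₀ (hσ0 _) (hmono _ _ h1) 2
  calc ∏ i, σ (f i) ^ 2 = σ (f l) ^ 2 * ∏ i ∈ Finset.univ.erase l, σ (f i) ^ 2 :=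
        (Finset.mul_prod_erase _ _ (Finset.mem_univ l)).symm
    _ ≤ σ (f l) ^ 2 * ∏ i ∈ Finset.univ.erase l, σ (Fin.castLE hpn i) ^ 2 := by
        exact mul_le_mul_of_nonneg_left hrest_le (sq_nonneg _)
    _ < σ (Fin.castLE hpn l) ^ 2 * ∏ i ∈ Finset.univ.erase l, σ (Fin.castLE hpn i) ^ 2 :=
        mul_lt_mul_of_pos_right hstep hrest_pos
    _ = ∏ i, σ (Fin.castLE hpn i) ^ 2 :=
        Finset.mul_prod_erase Finset.univ (fun i => σ (Fin.castLE hpn i) ^ 2) (Finset.mem_univ l)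

end




section
variable {n p : ℕ} (hpn : p ≤ n) (σ : Fin n → ℝ)

/-- expansion of `det (Yᵀ Γ Y)` as a combination of squared minors -/
lemma det_expand (Y : Matrix (Fin n) (Fin p) ℝ) :
    (Yᵀ * Matrix.diagonal (fun i => σ i ^ 2) * Y).det
      = ∑ f ∈ Finset.univ.filter (fun f : Fin p → Fin n => StrictMono f),
          (∏ i, σ (f i) ^ 2) * (Y.submatrix f id).det ^ 2 := by
  have hD : Matrix.diagonal (fun i => σ i ^ 2)
      = (Matrix.diagonal σ)ᵀ * Matrix.diagonal σ := by
    have h2 : (fun i : Fin n => σ i ^ 2) = fun i => σ i * σ i := funext fun i => pow_two (σ i)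
    rw [h2, diagonal_transpose, diagonal_mul_diagonal]
  have hA : Yᵀ * Matrix.diagonal (fun i => σ i ^ 2) * Y
      = (Matrix.diagonal σ * Y)ᵀ * (Matrix.diagonal σ * Y) := by
    rw [hD, transpose_mul]
    simp only [Matrix.mul_assoc]
  rw [hA, cauchy_binet]
  refine Finset.sum_congr rfl fun f hf => ?_
  have hsub : (Matrix.diagonal σ * Y).submatrix f id
      = Matrix.diagonal (fun i => σ (f i)) * (Y.submatrix f id) := by
    ext i j
    simp [Matrix.diagonal_mul]
  rw [hsub, det_mul, det_diagonal, Finset.prod_pow]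
  ring

/-- sum of squared minors of an orthonormal frame is 1 -/
lemma minors_sum_one (Y : Matrix (Fin n) (Fin p) ℝ) (hY : Yᵀ * Y = 1) :
    ∑ f ∈ Finset.univ.filter (fun f : Fin p → Fin n => StrictMono f),
      (Y.submatrix f id).det ^ 2 = 1 := by
  have := cauchy_binet Y Y
  rw [hY, det_one] at this
  rw [this]
  exact Finset.sum_congr rfl fun f _ => pow_two _

/-- splitting a sum over `Fin n` when the tail vanishes -/
lemma sum_split (F : Fin n → ℝ) (h : ∀ k : Fin n, p ≤ (k : ℕ) → F k = 0) :
    ∑ k, F k = ∑ j : Fin p, F (Fin.castLE hpn j) := by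
  have : ∑ j : Fin p, F (Fin.castLE hpn j)
      = ∑ k ∈ Finset.univ.map (Fin.castLEEmb hpn), F k := by
    rw [Finset.sum_map]
    rfl
  rw [this]
  symm
  apply Finset.sum_subset (Finset.subset_univ _)
  intro k _ hk
  apply h
  by_contra hlt
  push_neg at hlt
  exact hk (Finset.mem_map.2 ⟨⟨(k : ℕ), hlt⟩, Finset.mem_univ _, by
    simp [Fin.castLEEmb]⟩)

end


section
variable {n p : ℕ} (hpn : p ≤ n)

/-- membership in the span of the first `p` coordinate vectors -/
lemma mem_span_iff (w : Fin n → ℝ) :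
    w ∈ Submodule.span ℝ (Set.range fun i : Fin p =>
        (Pi.single (Fin.castLE hpn i) 1 : Fin n → ℝ))
      ↔ ∀ k : Fin n, p ≤ (k : ℕ) → w k = 0 := by
  constructor
  · intro hw k hk
    induction hw using Submodule.span_induction with
    | mem x hx =>
        obtain ⟨i, rfl⟩ := hx
        apply Pi.single_eq_of_ne
        intro h
        rw [h] at hk
        simp at hk
        omega
    | zero => rfl
    | add x y _ _ hx hy => simp [hx, hy]
    | smul c x _ hx => simp [hx]
  · intro hw
    have hw' : w = ∑ j : Fin p, w (Fin.castLE hpn j) •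
        (Pi.single (Fin.castLE hpn j) 1 : Fin n → ℝ) := by
      funext k
      rw [Finset.sum_apply]
      by_cases hk : (k : ℕ) < p
      · rw [Finset.sum_eq_single ⟨(k : ℕ), hk⟩]
        · simp [Pi.single_apply, Fin.ext_iff]
        · intro j _ hj
          have : k ≠ Fin.castLE hpn j := by
            intro h
            apply hj
            rw [Fin.ext_iff] at h ⊢
            simpa using h.symm
          simp [Pi.single_apply, this.symm]
        · intro h
          exact absurd (Finset.mem_univ _) h
      · push_neg at hk
        rw [hw k hk]
        symm
        apply Finset.sum_eq_zero
        intro j _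
        have : k ≠ Fin.castLE hpn j := by
          intro h
          rw [h] at hk
          simp at hk
          omega
        simp [Pi.single_apply, this.symm]
    rw [hw']
    exact Submodule.sum_mem _ fun j _ =>
      Submodule.smul_mem _ _ (Submodule.subset_span ⟨j, rfl⟩)

end


section
variable {n p : ℕ} (hpn : p ≤ n) (σ : Fin n → ℝ)

lemma Y0_orth : (Matrix.of fun i j => if i = Fin.castLE hpn j then (1:ℝ) else 0)ᵀ *
    (Matrix.of fun i j => if i = Fin.castLE hpn j then (1:ℝ) else 0) = 1 := by
  ext j k
  simp only [Matrix.mul_apply, transpose_apply, Matrix.of_apply, Matrix.one_apply,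
    ite_mul, one_mul, zero_mul]
  rw [Finset.sum_ite_eq' Finset.univ (Fin.castLE hpn j)]
  simp [Fin.ext_iff, eq_comm]

lemma Y0_val : (Matrix.of fun i j => if i = Fin.castLE hpn j then (1:ℝ) else 0)ᵀ *
      Matrix.diagonal (fun i => σ i ^ 2) *
      (Matrix.of fun i j => if i = Fin.castLE hpn j then (1:ℝ) else 0)
    = Matrix.diagonal fun j => σ (Fin.castLE hpn j) ^ 2 := by
  ext j k
  rw [Matrix.mul_assoc]
  simp only [Matrix.mul_apply, transpose_apply, Matrix.of_apply, Matrix.diagonal_apply,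
    ite_mul, one_mul, zero_mul, mul_ite, mul_one, mul_zero]
  rw [Finset.sum_ite_eq' Finset.univ (Fin.castLE hpn j)]
  rw [if_pos (Finset.mem_univ _)]
  rw [Finset.sum_ite_eq' Finset.univ (Fin.castLE hpn k)]
  rw [if_pos (Finset.mem_univ _)]
  by_cases h : j = k
  · subst h
    simp
  · have h2 : Fin.castLE hpn j ≠ Fin.castLE hpn k := by
      simpa [Fin.ext_iff] using (fun hh => h (Fin.ext hh))
    simp [h, h2]

end




section
variable {n p : ℕ} (hpn : p ≤ n)

lemma castLE_sm : StrictMono (Fin.castLE hpn) := fun a b hab => by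
  rw [Fin.lt_def] at hab ⊢; exact hab

/-- if all "other" minors of X vanish and the top minor does not, rows below p vanish -/
lemma rows_zero (X : Matrix (Fin n) (Fin p) ℝ)
    (hdet : (X.submatrix (Fin.castLE hpn) id).det ≠ 0)
    (hmin : ∀ f : Fin p → Fin n, StrictMono f → f ≠ Fin.castLE hpn →
      (X.submatrix f id).det = 0)
    (k : Fin n) (hk : p ≤ (k : ℕ)) : ∀ j, X k j = 0 := by
  set A := X.submatrix (Fin.castLE hpn) id with hA
  set v : Fin p → ℝ := X k with hv
  set c : Fin p → ℝ := A⁻¹.vecMul v with hc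
  have hvc : A.vecMul c = v := by
    rw [hc, Matrix.vecMul_vecMul, Matrix.nonsing_inv_mul A (isUnit_iff_ne_zero.2 hdet),
      Matrix.vecMul_one]
  have hvsum : v = ∑ l, c l • A l := by
    rw [← hvc]
    funext j
    simp [Matrix.vecMul, dotProduct, Finset.sum_apply]
  -- minors with one row replaced vanish
  have hupdate : ∀ i : Fin p, (A.updateRow i v).det = 0 := by
    intro i
    set g : Fin p → Fin n := Function.update (Fin.castLE hpn) i k with hg
    have hginj : Function.Injective g := by
      intro a b hab
      have hgval : ∀ l : Fin p, g l = if l = i then k else Fin.castLE hpn l := by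
        intro l
        rcases eq_or_ne l i with rfl | hl
        · simp [hg]
        · simp [hg, Function.update_of_ne hl, hl]
      rw [hgval a, hgval b] at hab
      rcases eq_or_ne a i with ha | ha <;> rcases eq_or_ne b i with hb | hb
      · rw [ha, hb]
      · exfalso
        rw [if_pos ha, if_neg hb] at hab
        have h1 : (k : ℕ) < p := by rw [hab]; simpa using b.isLt
        omega
      · exfalso
        rw [if_neg ha, if_pos hb] at hab
        have h1 : (k : ℕ) < p := by rw [← hab]; simpa using a.isLt
        omega
      · rw [if_neg ha, if_neg hb] at hab
        exact castLE_sm hpn |>.injective hab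
    have heqm : A.updateRow i v = X.submatrix g id := by
      ext l j
      rcases eq_or_ne l i with rfl | hl
      · simp [hg, hv]
      · simp [Matrix.updateRow_ne hl, hg, Function.update_of_ne hl, hA]
    obtain ⟨f, τ, hsm, hfact⟩ := exists_sm_comp hginj
    have hfne : f ≠ Fin.castLE hpn := by
      intro h
      have : g i = f (τ i) := by rw [hfact]; rfl
      rw [h] at this
      have h2 : g i = k := by simp [hg]
      rw [h2] at this
      have h1 : (k : ℕ) < p := by rw [this]; simpa using (τ i).isLt
      omega
    have h0 : (X.submatrix f id).det = 0 := hmin f hsm hfne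
    have : X.submatrix g id = (X.submatrix f id).submatrix τ id := by
      rw [hfact]; rfl
    rw [heqm, this, Matrix.det_permute, h0, mul_zero]
  have hczero : ∀ i, c i = 0 := by
    intro i
    have h1 : (A.updateRow i v).det = c i • A.det := by
      rw [hvsum]
      exact Matrix.det_updateRow_sum A i c
    rw [hupdate i] at h1
    have := h1.symm
    rw [smul_eq_mul] at this
    rcases mul_eq_zero.1 this with h | h
    · exact h
    · exact absurd h hdet
  intro j
  have : v = 0 := by
    rw [← hvc]
    funext j'
    simp [Matrix.vecMul, dotProduct, hczero]
  rw [hv] at this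
  exact congrFun this j

end

section
variable {n p : ℕ} (hpn : p ≤ n)

lemma mulVec_single_eq (X : Matrix (Fin n) (Fin p) ℝ) (k : Fin n) (j : Fin p) :
    (X *ᵥ Pi.single j 1) k = X k j := by
  simp only [Matrix.mulVec, dotProduct, Pi.single_apply, mul_ite, mul_one, mul_zero]
  rw [Finset.sum_ite_eq' Finset.univ j]
  simp

lemma det_of_rows_zero (σ : Fin n → ℝ) (X : Matrix (Fin n) (Fin p) ℝ) (hX : Xᵀ * X = 1)
    (hrow : ∀ k : Fin n, p ≤ (k : ℕ) → ∀ j, X k j = 0) :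
    (Xᵀ * Matrix.diagonal (fun i => σ i ^ 2) * X).det
      = ∏ j : Fin p, σ (Fin.castLE hpn j) ^ 2 := by
  set A := X.submatrix (Fin.castLE hpn) id with hA
  have hAA : Aᵀ * A = 1 := by
    rw [← hX]
    ext j l
    simp only [Matrix.mul_apply, transpose_apply, hA, submatrix_apply, id_eq]
    exact (sum_split hpn (fun k => X k j * X k l)
      (fun k hk => by show X k j * X k l = 0; rw [hrow k hk j, zero_mul])).symm
  have hform : Xᵀ * Matrix.diagonal (fun i => σ i ^ 2) * X
      = Aᵀ * Matrix.diagonal (fun m : Fin p => σ (Fin.castLE hpn m) ^ 2) * A := by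
    ext j l
    rw [Matrix.mul_assoc, Matrix.mul_assoc]
    have hL : ∀ k, (Matrix.diagonal (fun i => σ i ^ 2) * X) k l = σ k ^ 2 * X k l :=
      fun k => by simp [Matrix.diagonal_mul]
    have hR : ∀ m, (Matrix.diagonal (fun m : Fin p => σ (Fin.castLE hpn m) ^ 2) * A) m l
        = σ (Fin.castLE hpn m) ^ 2 * A m l := fun m => by simp [Matrix.diagonal_mul]
    have e1 : (Xᵀ * (Matrix.diagonal (fun i => σ i ^ 2) * X)) j l
        = ∑ k, X k j * (σ k ^ 2 * X k l) := by
      rw [Matrix.mul_apply]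
      exact Finset.sum_congr rfl fun k _ => by rw [transpose_apply, hL k]
    have e2 : (Aᵀ * (Matrix.diagonal (fun m : Fin p => σ (Fin.castLE hpn m) ^ 2) * A)) j l
        = ∑ m, A m j * (σ (Fin.castLE hpn m) ^ 2 * A m l) := by
      rw [Matrix.mul_apply]
      exact Finset.sum_congr rfl fun m _ => by rw [transpose_apply, hR m]
    rw [e1, e2]
    exact sum_split hpn (fun k => X k j * (σ k ^ 2 * X k l))
      (fun k hk => by show X k j * (σ k ^ 2 * X k l) = 0; rw [hrow k hk j, zero_mul])
  rw [hform, det_mul, det_mul, det_transpose, det_diagonal]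
  have hdet1 : A.det * A.det = 1 := by
    have := congrArg Matrix.det hAA
    rwa [det_mul, det_transpose, det_one] at this
  calc A.det * (∏ m : Fin p, σ (Fin.castLE hpn m) ^ 2) * A.det
      = (A.det * A.det) * ∏ m : Fin p, σ (Fin.castLE hpn m) ^ 2 := by ring
    _ = ∏ m : Fin p, σ (Fin.castLE hpn m) ^ 2 := by rw [hdet1, one_mul]

end


/-- With `Γ = diag(σ₁²,…,σ_n²)`, `σ` nonincreasing nonnegative and a spectral gap
`σ_p > σ_{p+1}` (0-indexed: `σ` at index `p-1` exceeds `σ` at index `p`),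
`X ∈ St(n,p)` maximises `det(XᵀΓX)` over the Stiefel manifold iff `range(X)` is
the span of the first `p` standard basis vectors, and then the maximum value is
`∏_{i<p} σ_i²`. -/
theorem stmt_5 {n p : ℕ} (hpn : p ≤ n) (hp : 0 < p) (σ : Fin n → ℝ)
    (hmono : ∀ i j : Fin n, i ≤ j → σ j ≤ σ i) (hσ0 : ∀ i, 0 ≤ σ i)
    (i₁ i₂ : Fin n) (hi₁ : (i₁ : ℕ) = p - 1) (hi₂ : (i₂ : ℕ) = p)
    (hgap : σ i₂ < σ i₁)
    (Γ : Matrix (Fin n) (Fin n) ℝ) (hΓ : Γ = Matrix.diagonal fun i => σ i ^ 2)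
    (X : Matrix (Fin n) (Fin p) ℝ) (hX : Xᵀ * X = 1) :
    ((∀ Y : Matrix (Fin n) (Fin p) ℝ, Yᵀ * Y = 1 →
        (Yᵀ * Γ * Y).det ≤ (Xᵀ * Γ * X).det)
      ↔ LinearMap.range X.mulVecLin
          = Submodule.span ℝ (Set.range fun i : Fin p =>
              (Pi.single (Fin.castLE hpn i) 1 : Fin n → ℝ)))
    ∧ ((∀ Y : Matrix (Fin n) (Fin p) ℝ, Yᵀ * Y = 1 →
        (Yᵀ * Γ * Y).det ≤ (Xᵀ * Γ * X).det) →
        (Xᵀ * Γ * X).det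
          = ∏ i ∈ Finset.univ.filter (fun i : Fin n => (i : ℕ) < p), σ i ^ 2) := by
  subst hΓ
  -- the candidate maximal value
  have hbound : ∀ Y : Matrix (Fin n) (Fin p) ℝ, Yᵀ * Y = 1 →
      (Yᵀ * Matrix.diagonal (fun i => σ i ^ 2) * Y).det
        ≤ ∏ i : Fin p, σ (Fin.castLE hpn i) ^ 2 := by
    intro Y hY
    rw [det_expand]
    calc ∑ f ∈ Finset.univ.filter (fun f : Fin p → Fin n => StrictMono f),
          (∏ i, σ (f i) ^ 2) * (Y.submatrix f id).det ^ 2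
        ≤ ∑ f ∈ Finset.univ.filter (fun f : Fin p → Fin n => StrictMono f),
          (∏ i : Fin p, σ (Fin.castLE hpn i) ^ 2) * (Y.submatrix f id).det ^ 2 := by
          refine Finset.sum_le_sum fun f hf => ?_
          exact mul_le_mul_of_nonneg_right
            (weight_le hpn σ hmono hσ0 (Finset.mem_filter.1 hf).2) (sq_nonneg _)
      _ = ∏ i : Fin p, σ (Fin.castLE hpn i) ^ 2 := by
          rw [← Finset.mul_sum, minors_sum_one Y hY, mul_one]
  have hY₀det : ((Matrix.of fun i j => if i = Fin.castLE hpn j then (1:ℝ) else 0)ᵀ *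
      Matrix.diagonal (fun i => σ i ^ 2) *
      (Matrix.of fun i j => if i = Fin.castLE hpn j then (1:ℝ) else 0)).det
        = ∏ i : Fin p, σ (Fin.castLE hpn i) ^ 2 := by
    rw [Y0_val hpn σ, det_diagonal]
  have hvalue : (∀ Y : Matrix (Fin n) (Fin p) ℝ, Yᵀ * Y = 1 →
      (Yᵀ * Matrix.diagonal (fun i => σ i ^ 2) * Y).det
        ≤ (Xᵀ * Matrix.diagonal (fun i => σ i ^ 2) * X).det) →
      (Xᵀ * Matrix.diagonal (fun i => σ i ^ 2) * X).det
        = ∏ i : Fin p, σ (Fin.castLE hpn i) ^ 2 := by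
    intro hmax
    refine le_antisymm (hbound X hX) ?_
    rw [← hY₀det]
    exact hmax _ (Y0_orth hpn)
  refine ⟨⟨fun hmax => ?_, fun hrange => ?_⟩, fun hmax => ?_⟩
  · -- maximality → range condition
    have hd : ∑ f ∈ Finset.univ.filter (fun f : Fin p → Fin n => StrictMono f),
        (∏ i, σ (f i) ^ 2) * (X.submatrix f id).det ^ 2
          = ∏ i : Fin p, σ (Fin.castLE hpn i) ^ 2 := by
      rw [← det_expand σ X]
      exact hvalue hmax
    have hsum1 := minors_sum_one X hX
    have htot : ∑ f ∈ Finset.univ.filter (fun f : Fin p → Fin n => StrictMono f),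
        ((∏ i : Fin p, σ (Fin.castLE hpn i) ^ 2) - ∏ i, σ (f i) ^ 2) *
          (X.submatrix f id).det ^ 2 = 0 := by
      simp only [sub_mul]
      rw [Finset.sum_sub_distrib, ← Finset.mul_sum, hsum1, hd, mul_one, sub_self]
    have hzero := (Finset.sum_eq_zero_iff_of_nonneg fun f hf =>
      mul_nonneg (sub_nonneg.2 (weight_le hpn σ hmono hσ0 (Finset.mem_filter.1 hf).2))
        (sq_nonneg _)).1 htot
    have hmin : ∀ f : Fin p → Fin n, StrictMono f → f ≠ Fin.castLE hpn →
        (X.submatrix f id).det = 0 := by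
      intro f hsm hne
      have hfS : f ∈ Finset.univ.filter (fun f : Fin p → Fin n => StrictMono f) :=
        Finset.mem_filter.2 ⟨Finset.mem_univ _, hsm⟩
      rcases mul_eq_zero.1 (hzero f hfS) with h | h
      · exfalso
        have := weight_lt hpn hp σ hmono hσ0 i₁ i₂ hi₁ hi₂ hgap hsm hne
        linarith
      · exact (pow_eq_zero_iff two_ne_zero).1 h
    have hdetA : (X.submatrix (Fin.castLE hpn) id).det ≠ 0 := by
      intro h0
      have hz : ∑ f ∈ Finset.univ.filter (fun f : Fin p → Fin n => StrictMono f),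
          (X.submatrix f id).det ^ 2 = 0 := by
        refine Finset.sum_eq_zero fun f hf => ?_
        rcases eq_or_ne f (Fin.castLE hpn) with rfl | hne
        · rw [h0]; ring
        · rw [hmin f (Finset.mem_filter.1 hf).2 hne]; ring
      rw [hsum1] at hz
      norm_num at hz
    have hrow := rows_zero hpn X hdetA hmin
    -- prove the two inclusions
    apply le_antisymm
    · rintro w ⟨v, rfl⟩
      refine (mem_span_iff hpn _).2 fun k hk => ?_
      rw [Matrix.mulVecLin_apply]
      simp only [Matrix.mulVec, dotProduct]
      exact Finset.sum_eq_zero fun l _ => by rw [hrow k hk l, zero_mul]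
    · rw [Submodule.span_le]
      rintro _ ⟨i, rfl⟩
      have hAinv : X.submatrix (Fin.castLE hpn) id * (X.submatrix (Fin.castLE hpn) id)⁻¹ = 1 :=
        Matrix.mul_nonsing_inv _ (isUnit_iff_ne_zero.2 hdetA)
      refine ⟨(X.submatrix (Fin.castLE hpn) id)⁻¹ *ᵥ Pi.single i 1, ?_⟩
      rw [Matrix.mulVecLin_apply]
      have hAu : X.submatrix (Fin.castLE hpn) id *ᵥ
          ((X.submatrix (Fin.castLE hpn) id)⁻¹ *ᵥ Pi.single i 1) = Pi.single i 1 := by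
        rw [Matrix.mulVec_mulVec, hAinv, Matrix.one_mulVec]
      funext k
      by_cases hk : (k : ℕ) < p
      · have hkc : k = Fin.castLE hpn ⟨(k : ℕ), hk⟩ := by rw [Fin.ext_iff]; rfl
        have h1 : (X *ᵥ ((X.submatrix (Fin.castLE hpn) id)⁻¹ *ᵥ Pi.single i 1)) k
            = (X.submatrix (Fin.castLE hpn) id *ᵥ
                ((X.submatrix (Fin.castLE hpn) id)⁻¹ *ᵥ Pi.single i 1)) ⟨(k : ℕ), hk⟩ := by
          simp only [Matrix.mulVec, dotProduct, submatrix_apply, id_eq]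
          refine Finset.sum_congr rfl fun l _ => ?_
          rw [← hkc]
        rw [h1, hAu]
        simp [Pi.single_apply, Fin.ext_iff]
      · push_neg at hk
        have h1 : (X *ᵥ ((X.submatrix (Fin.castLE hpn) id)⁻¹ *ᵥ Pi.single i 1)) k = 0 := by
          simp only [Matrix.mulVec, dotProduct]
          exact Finset.sum_eq_zero fun l _ => by rw [hrow k hk l, zero_mul]
        rw [h1]
        have hne : k ≠ Fin.castLE hpn i := by
          intro h
          rw [h] at hk
          simp at hk
          omega
        exact (Pi.single_eq_of_ne (M := fun _ : Fin n => ℝ) hne 1).symm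
  · -- range condition → maximality
    have hrow : ∀ k : Fin n, p ≤ (k : ℕ) → ∀ j, X k j = 0 := by
      intro k hk j
      have hmem : X *ᵥ Pi.single j 1 ∈ LinearMap.range X.mulVecLin :=
        LinearMap.mem_range_self _ _
      rw [hrange] at hmem
      have := (mem_span_iff hpn _).1 hmem k hk
      rwa [mulVec_single_eq] at this
    intro Y hY
    rw [det_of_rows_zero hpn σ X hX hrow]
    exact hbound Y hY
  · -- the value
    rw [hvalue hmax]
    have hfilter : Finset.univ.filter (fun i : Fin n => (i : ℕ) < p)
        = Finset.univ.map (Fin.castLEEmb hpn) := by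
      ext k
      simp only [Finset.mem_filter, Finset.mem_univ, true_and]
      constructor
      · intro hk
        refine Finset.mem_map.2 ⟨⟨(k : ℕ), hk⟩, Finset.mem_univ _, ?_⟩
        simp [Fin.castLEEmb, Fin.ext_iff]
      · intro hk
        obtain ⟨j, _, rfl⟩ := Finset.mem_map.1 hk
        simpa [Fin.castLEEmb] using j.isLt
    rw [hfilter, Finset.prod_map]
    rfl
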